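/- Let G = (V, D, B) be a DMG with n vertices and SCC-Anc partition {𝒯_1, …, 𝒯_{l+1}}, and let M be an integer with M ≥ max{ max_{X,Y∈V, X≠Y} |Pa_G({X,Y})|, |T_{l+1}|_n + ζ^{l+1}_max − 1 }. Let C_1, …, C_K be an edge clique cover of the undirected component graph G^{uc}, each clique containing at least two vertices. Then there exists a non-adjacent separating system 𝓘 on (V, D) such that |I| ≤ M for every I ∈ 𝓘 and |𝓘| ≤ Σ_{k=1}^{K} ( 1 + ⌊ ( (|C_k|(|C_k|−1)/2 − 1) · (n − |C_k|) ) / ( M + 1 − max_{X,Y∈C_k, X≠Y} |Pa_G({X,Y})| ) ⌋ ). -/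

import Mathlib

universe u

/-- A directed mixed graph (DMG): directed edges `D` (no self-loops) and
bidirected edges `B` (symmetric, no self-loops). -/
structure DMG (V : Type u) where
  D : V → V → Prop
  B : V → V → Prop
  D_irrefl : ∀ x, ¬ D x x
  B_symm : ∀ x y, B x y → B y x
  B_irrefl : ∀ x, ¬ B x x

namespace DMG

variable {V : Type u}

/-- `x` is an ancestor of `y` (reflexive-transitive closure of `D`). -/
def anc (G : DMG V) (x y : V) : Prop := Relation.ReflTransGen G.D x y

/-- ancestors of a set of vertices -/
def ancSet (G : DMG V) (W : Set V) : Set V := {x | ∃ y ∈ W, G.anc x y}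

/-- the strongly connected component of `x` -/
def scc (G : DMG V) (x : V) : Set V := {y | G.anc x y ∧ G.anc y x}

/-- parents of a vertex -/
def pa (G : DMG V) (x : V) : Set V := {y | G.D y x}

/-- parents of a set of vertices -/
def paSet (G : DMG V) (W : Set V) : Set V := {y | ∃ x ∈ W, G.D y x}

/-- non-adjacent bidirected edges -/
def BN (G : DMG V) : V → V → Prop := fun x y => G.B x y ∧ ¬ G.D x y ∧ ¬ G.D y x

/-- the intervened graph `G_Ī` -/
def intervene (G : DMG V) (I : Set V) : DMG V where
  D a b := G.D a b ∧ b ∉ I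
  B a b := G.B a b ∧ a ∉ I ∧ b ∉ I
  D_irrefl := fun x h => G.D_irrefl x h.1
  B_symm := fun x y h => ⟨G.B_symm x y h.1, h.2.2, h.2.1⟩
  B_irrefl := fun x h => G.B_irrefl x h.1

/-- the directed skeleton `G^u` -/
def skel (G : DMG V) : SimpleGraph V where
  Adj x y := x ≠ y ∧ (G.D x y ∨ G.D y x)
  symm := ⟨fun _ _ h => ⟨h.1.symm, h.2.elim Or.inr Or.inl⟩⟩
  loopless := ⟨fun _ h => h.1 rfl⟩

/-- the undirected component graph `G^{uc}` -/
def ucomp (G : DMG V) : SimpleGraph V where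
  Adj x y := x ≠ y ∧ ¬ G.D x y ∧ ¬ G.D y x
  symm := ⟨fun _ _ h => ⟨h.1.symm, h.2.2, h.2.1⟩⟩
  loopless := ⟨fun _ h => h.1 rfl⟩

/-- `S` is an SCC of `G` -/
def isSCC (G : DMG V) (S : Set V) : Prop := ∃ x, S = G.scc x

/-- `S` is an SCC-ancestor of the distinct SCC `S'` -/
def sccAncestor (G : DMG V) (S S' : Set V) : Prop :=
  S ≠ S' ∧ ∃ x ∈ S, ∃ y ∈ S', G.anc x y

/-- `S` is a `k`-order SCC-ancestor of `S'`: there is a directed path from a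
vertex of `S` to a vertex of `S'` passing through at most `k-1` SCCs other than
`S` and `S'`. -/
def kOrderSCCAnc (G : DMG V) (k : ℕ) (S S' : Set V) : Prop :=
  S ≠ S' ∧ ∃ p : List V, p ≠ [] ∧ p.Chain' G.D ∧
    (∃ x ∈ S, p.head? = some x) ∧ (∃ y ∈ S', p.getLast? = some y) ∧
    ({C : Set V | ∃ z ∈ p, z ∉ S ∧ z ∉ S' ∧ C = G.scc z}).ncard ≤ k - 1

/-- `G` has SCC-Anc length `l` : `l` is the least integer such that every
SCC-ancestor of any SCC is an `l`-order SCC-ancestor. -/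
def sccAncLength (G : DMG V) (l : ℕ) : Prop :=
  IsLeast {m | ∀ S S' : Set V, G.isSCC S → G.isSCC S' →
    G.sccAncestor S' S → G.kOrderSCCAnc m S' S} l

/-- membership in the first layer `𝒯_1` of the SCC-Anc partition -/
def sccLayer0 (G : DMG V) (S : Set V) : Prop :=
  G.isSCC S ∧ ¬ ∃ S' : Set V, G.isSCC S' ∧ G.sccAncestor S' S

/-- `m` is the least order at which `S'` is an SCC-ancestor of `S` -/
def minOrd (G : DMG V) (S' S : Set V) (m : ℕ) : Prop :=
  IsLeast {j | G.kOrderSCCAnc j S' S} m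

/-- membership in the layer `𝒯_{i+1}` of the SCC-Anc partition (0-indexed `i`):
for `i ≥ 1`, `S ∈ 𝒯_{i+1}` iff some SCC of `𝒯_1` is an `i`-order SCC-ancestor
of `S` and no SCC of `𝒯_1` is only an `r`-order SCC-ancestor of `S` for `r > i`,
i.e. `i` is the largest minimal order of a `𝒯_1` SCC-ancestor of `S`. -/
def sccLayer (G : DMG V) (i : ℕ) (S : Set V) : Prop :=
  if i = 0 then G.sccLayer0 S
  else G.isSCC S ∧ IsGreatest {m | ∃ S' : Set V, G.sccLayer0 S' ∧ G.minOrd S' S m} i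

/-- `T_{k+1}` (0-indexed `k`): the set of vertices in layers `𝒯_1, …, 𝒯_k` -/
def TUnion (G : DMG V) (k : ℕ) : Set V :=
  {v | ∃ i < k, ∃ S : Set V, G.sccLayer i S ∧ v ∈ S}

/-- SCC-Anc separating system on `(V, 𝕋^G)` (layers 0-indexed by `0,…,l`) -/
def SCCAncSepSystem (G : DMG V) (l : ℕ) (𝓘 : Set (Set V)) : Prop :=
  ∀ k ≤ l, ∀ S : Set V, G.sccLayer k S → ∀ X ∈ S,
    ∃ I ∈ 𝓘, (G.TUnion k ∪ S) \ {X} ⊆ I ∧ X ∉ I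

/-- `G` with the directed edge `(F, S)` removed -/
def removeDir (G : DMG V) (F S : V) : DMG V where
  D a b := G.D a b ∧ ¬(a = F ∧ b = S)
  B := G.B
  D_irrefl := fun x h => G.D_irrefl x h.1
  B_symm := G.B_symm
  B_irrefl := fun x h => G.B_irrefl x h

/-- `G` with the bidirected edge `{S, R}` removed -/
def removeBi (G : DMG V) (S R : V) : DMG V where
  D := G.D
  B a b := G.B a b ∧ ¬((a = S ∧ b = R) ∨ (a = R ∧ b = S))
  D_irrefl := G.D_irrefl
  B_symm := by
    intro x y h
    refine ⟨G.B_symm x y h.1, ?_⟩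
    rintro (⟨h1, h2⟩ | ⟨h1, h2⟩)
    · exact h.2 (Or.inr ⟨h2, h1⟩)
    · exact h.2 (Or.inl ⟨h2, h1⟩)
  B_irrefl := fun x h => G.B_irrefl x h.1

end DMG

/-- kinds of edges along a mixed path: forward directed, backward directed, bidirected -/
inductive EKind | fwd | bwd | bi

/-- a mixed path skeleton: `k ≥ 1` steps, vertices `Z 0, …, Z k`, edges `E 0, …, E (k-1)`
(step `i` joins `Z i` and `Z (i+1)`). -/
structure MPath (V : Type u) where
  k : ℕ
  Z : ℕ → V
  E : ℕ → EKind
  hk : 1 ≤ k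

namespace MPath

variable {V : Type u}

/-- the path is a path of `G` -/
def valid (p : MPath V) (G : DMG V) : Prop :=
  ∀ i < p.k,
    (p.E i = EKind.fwd → G.D (p.Z i) (p.Z (i+1))) ∧
    (p.E i = EKind.bwd → G.D (p.Z (i+1)) (p.Z i)) ∧
    (p.E i = EKind.bi → G.B (p.Z i) (p.Z (i+1)))

/-- the step has an arrowhead at its second endpoint -/
def headAtSnd : EKind → Prop
  | EKind.fwd => True
  | EKind.bi => True
  | EKind.bwd => False

/-- the step has an arrowhead at its first endpoint -/
def headAtFst : EKind → Prop
  | EKind.bwd => True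
  | EKind.bi => True
  | EKind.fwd => False

/-- `Z i` is a collider on the path (meaningful for `1 ≤ i ≤ k-1`) -/
def collider (p : MPath V) (i : ℕ) : Prop :=
  headAtSnd (p.E (i-1)) ∧ headAtFst (p.E i)

end MPath

/-- the separation rule: `d`-separation or `σ`-separation -/
inductive SepRule | d | s

/-- the path between `x` and `y` is `r`-blocked by `S` in `G` -/
def MPath.blocked {V : Type u} (p : MPath V) (G : DMG V) (r : SepRule) (S : Set V)
    (x y : V) : Prop :=
  ∃ i, 1 ≤ i ∧ i < p.k ∧
    ((p.collider i ∧ p.Z i ∉ G.ancSet (S ∪ {x, y})) ∨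
     (¬ p.collider i ∧ p.Z i ∈ S ∧
       (r = SepRule.d ∨
        (p.E i = EKind.fwd ∧ p.Z (i+1) ∉ G.scc (p.Z i)) ∨
        (p.E (i-1) = EKind.bwd ∧ p.Z (i-1) ∉ G.scc (p.Z i)))))

/-- `S` `r`-separates `x` and `y` in `G` -/
def rSep {V : Type u} (G : DMG V) (r : SepRule) (S : Set V) (x y : V) : Prop :=
  ∀ p : MPath V, p.valid G → p.Z 0 = x → p.Z p.k = y → p.blocked G r S x y

/-- the `r`-independence model of `G` -/
def IM {V : Type u} (G : DMG V) (r : SepRule) : Set (V × V × Set V) :=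
  {t | t.1 ≠ t.2.1 ∧ t.1 ∉ t.2.2 ∧ t.2.1 ∉ t.2.2 ∧ rSep G r t.2.2 t.1 t.2.1}

/-- `G` and `H` are `𝓘`-`r`-Markov equivalent -/
def IMEquiv {V : Type u} (G H : DMG V) (r : SepRule) (𝓘 : Set (Set V)) : Prop :=
  ∀ I ∈ 𝓘, IM (G.intervene I) r = IM (H.intervene I) r

/-- a `d`-inducing path between `x` and `y`: every collider is an ancestor of `{x,y}` -/
def MPath.dInducing {V : Type u} (p : MPath V) (G : DMG V) (x y : V) : Prop :=
  ∀ i, 1 ≤ i → i < p.k → p.collider i → p.Z i ∈ G.ancSet {x, y}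

/-- a `σ`-inducing path between `x` and `y` -/
def MPath.sInducing {V : Type u} (p : MPath V) (G : DMG V) (x y : V) : Prop :=
  p.dInducing G x y ∧
  ∀ i, 1 ≤ i → i < p.k → ¬ p.collider i →
    (p.E (i-1) = EKind.bwd → p.Z (i-1) ∈ G.scc (p.Z i)) ∧
    (p.E i = EKind.fwd → p.Z (i+1) ∈ G.scc (p.Z i))

/-- an `r`-inducing path -/
def MPath.rInducing {V : Type u} (p : MPath V) (G : DMG V) (r : SepRule) (x y : V) : Prop :=
  match r with
  | SepRule.d => p.dInducing G x y
  | SepRule.s => p.sInducing G x y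

/-- colored separating system on `(V, C)` -/
def ColoredSepSystem {V : Type u} {γ : Type*} (C : V → γ) (𝓘 : Set (Set V)) : Prop :=
  ∀ X Y : V, C X ≠ C Y → ∃ I ∈ 𝓘, X ∈ I ∧ Y ∉ I

/-- non-adjacent separating system on `(V, D)` -/
def NonAdjSepSystem {V : Type u} (G : DMG V) (𝓘 : Set (Set V)) : Prop :=
  ∀ X Y : V, X ≠ Y → ¬ G.D X Y → ¬ G.D Y X →
    ∃ I ∈ 𝓘, G.paSet {X, Y} ⊆ I ∧ X ∉ I ∧ Y ∉ I

/-- adjacent separating system on `(V, D)` -/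
def AdjSepSystem {V : Type u} (G : DMG V) (𝓘 : Set (Set V)) : Prop :=
  ∀ X Y : V, G.D X Y → ¬ G.D Y X →
    (∃ I ∈ 𝓘, G.paSet {X, Y} \ {X, Y} ⊆ I ∧ X ∉ I ∧ Y ∉ I) ∧
    (∃ I' ∈ 𝓘, G.paSet {X, Y} \ {Y} ⊆ I' ∧ X ∈ I' ∧ Y ∉ I')

/-- the minimum edge clique cover number `cc(H)` -/
noncomputable def ecc {V : Type u} (H : SimpleGraph V) : ℕ :=
  sInf {K | ∃ C : Fin K → Set V, (∀ k, H.IsClique (C k)) ∧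
    ∀ x y : V, H.Adj x y → ∃ k, x ∈ C k ∧ y ∈ C k}

/-- two edges that must receive different colors in a strong edge coloring:
they are distinct and share an endpoint or are both incident to a common third edge -/
def StrongAdjE {V : Type u} (H : SimpleGraph V) (e₁ e₂ : Sym2 V) : Prop :=
  e₁ ≠ e₂ ∧ ((∃ v, v ∈ e₁ ∧ v ∈ e₂) ∨
    ∃ e₃ ∈ H.edgeSet, e₃ ≠ e₁ ∧ e₃ ≠ e₂ ∧ (∃ v, v ∈ e₁ ∧ v ∈ e₃) ∧ ∃ u, u ∈ e₂ ∧ u ∈ e₃)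

/-- the strong edge chromatic number `χ_s(H)` -/
noncomputable def strongChrom {V : Type u} (H : SimpleGraph V) : ℕ :=
  sInf {K | ∃ f : Sym2 V → Fin K, ∀ e₁ ∈ H.edgeSet, ∀ e₂ ∈ H.edgeSet,
    StrongAdjE H e₁ e₂ → f e₁ ≠ f e₂}

namespace SepAux

/-- union of a list of sets -/
def listUnion {α : Type u} (l : List (Set α)) : Set α := l.foldr (· ∪ ·) ∅

lemma mem_listUnion {α : Type u} {l : List (Set α)} {x : α} :
    x ∈ listUnion l ↔ ∃ A ∈ l, x ∈ A := by
  induction l with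
  | nil => simp [listUnion]
  | cons a t ih =>
    show x ∈ a ∪ listUnion t ↔ _
    simp [Set.mem_union, ih]

lemma subset_listUnion {α : Type u} {l : List (Set α)} {A : Set α} (h : A ∈ l) :
    A ⊆ listUnion l := fun x hx => mem_listUnion.2 ⟨A, h, hx⟩

lemma ncard_listUnion_le {α : Type u} [Finite α] (l : List (Set α)) (s : ℕ)
    (h : ∀ A ∈ l, A.ncard ≤ s) : (listUnion l).ncard ≤ s * l.length := by
  induction l with
  | nil => simp [listUnion]
  | cons a t ih =>
    have : listUnion (a :: t) = a ∪ listUnion t := rfl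
    rw [this]
    calc (a ∪ listUnion t).ncard ≤ a.ncard + (listUnion t).ncard := Set.ncard_union_le _ _
      _ ≤ s + s * t.length := by
          exact Nat.add_le_add (h a List.mem_cons_self) (ih fun A hA => h A (List.mem_cons_of_mem _ hA))
      _ = s * (a :: t).length := by simp [List.length_cons, Nat.mul_succ, Nat.add_comm]

lemma grouping {α : Type u} [Finite α] (F : Finset (Set α)) (q s M : ℕ) (hq : 1 ≤ q)
    (hcard : ∀ A ∈ F, A.ncard ≤ s) (hsq : s * q ≤ M) (W : Set α)
    (hdisj : ∀ A ∈ F, ∀ x ∈ W, x ∉ A) :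
    ∃ J : Finset (Set α), J.card ≤ (F.card - 1) / q + 1 ∧
      (∀ I ∈ J, I.ncard ≤ M ∧ ∀ x ∈ W, x ∉ I) ∧
      ∀ A ∈ F, ∃ I ∈ J, A ⊆ I := by
  classical
  set L := F.toList with hL
  have hlen : L.length = F.card := F.length_toList
  refine ⟨(Finset.range ((F.card - 1) / q + 1)).image
      (fun j => listUnion ((L.drop (j*q)).take q)), ?_, ?_, ?_⟩
  · exact (Finset.card_image_le).trans (by simp)
  · intro I hI
    obtain ⟨j, _, rfl⟩ := Finset.mem_image.1 hI
    set l := (L.drop (j*q)).take q with hl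
    have hmem : ∀ A ∈ l, A ∈ F := fun A hA =>
      Finset.mem_toList.1 (List.mem_of_mem_drop (List.mem_of_mem_take hA))
    constructor
    · calc (listUnion l).ncard ≤ s * l.length :=
            ncard_listUnion_le l s (fun A hA => hcard A (hmem A hA))
        _ ≤ s * q := Nat.mul_le_mul_left s (by simp [hl, List.length_take])
        _ ≤ M := hsq
    · intro x hx hxI
      obtain ⟨A, hA, hxA⟩ := mem_listUnion.1 hxI
      exact hdisj A (hmem A hA) x hx hxA
  · intro A hA
    obtain ⟨i, hi, hgi⟩ := List.mem_iff_getElem.1 (Finset.mem_toList.2 hA)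
    set j := i / q with hj
    have hjq : j * q ≤ i := by rw [hj, Nat.mul_comm]; exact Nat.mul_div_le i q
    have hmod : q * (i / q) + i % q = i := Nat.div_add_mod i q
    have hjq2 : j * q = q * (i / q) := by rw [hj, Nat.mul_comm]
    have hiq : i - j * q < q := by
      have := Nat.mod_lt i (show 0 < q by omega)
      omega
    have hilen : i < L.length := hi
    refine ⟨listUnion ((L.drop (j*q)).take q), Finset.mem_image.2 ⟨j, ?_, rfl⟩, ?_⟩
    · refine Finset.mem_range.2 ?_
      have : j ≤ (F.card - 1) / q := Nat.div_le_div_right (by omega)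
      omega
    · have hr : i - j * q < ((L.drop (j*q)).take q).length := by
        simp only [List.length_take, List.length_drop]
        omega
      have : ((L.drop (j*q)).take q)[i - j*q] = A := by
        rw [List.getElem_take, List.getElem_drop]
        have : j * q + (i - j * q) = i := by omega
        simp_rw [this]; exact hgi
      exact this ▸ subset_listUnion (List.getElem_mem _)

end SepAux

namespace SepAux

variable {V : Type u}

lemma clique_key [Fintype V] (G : DMG V) (n M : ℕ) (hn : Fintype.card V = n)
    (hM1 : ∀ X Y : V, X ≠ Y → (G.paSet {X, Y}).ncard ≤ M)
    (Ck : Set V) (hclique : (G.ucomp).IsClique Ck) (hsize : 2 ≤ Ck.ncard) :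
    ∃ J : Finset (Set V),
      J.card ≤ 1 + ((Ck.ncard * (Ck.ncard - 1) / 2 - 1) * (n - Ck.ncard)) /
        (M + 1 - sSup {m | ∃ X ∈ Ck, ∃ Y ∈ Ck, X ≠ Y ∧ (G.paSet {X, Y}).ncard = m}) ∧
      (∀ I ∈ J, I.ncard ≤ M ∧ ∀ x ∈ Ck, x ∉ I) ∧
      ∀ X ∈ Ck, ∀ Y ∈ Ck, X ≠ Y → ∃ I ∈ J, G.paSet {X, Y} ⊆ I := by
  classical
  set c := Ck.ncard with hc
  set SN : Set ℕ := {m | ∃ X ∈ Ck, ∃ Y ∈ Ck, X ≠ Y ∧ (G.paSet {X, Y}).ncard = m} with hSN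
  set sS := sSup SN with hsS
  obtain ⟨X₀, Y₀, hX₀, hY₀, hne₀⟩ :=
    (Set.one_lt_ncard_iff (Set.toFinite _)).1 (by omega : 1 < Ck.ncard)
  have hSNne : SN.Nonempty := ⟨_, X₀, hX₀, Y₀, hY₀, hne₀, rfl⟩
  have hSNbdd : BddAbove SN := ⟨M, by rintro m ⟨X, hX, Y, hY, hne, rfl⟩; exact hM1 X Y hne⟩
  have hsM : sS ≤ M := csSup_le hSNne (by rintro m ⟨X, hX, Y, hY, hne, rfl⟩; exact hM1 X Y hne)
  have hsmem : sS ∈ SN := Nat.sSup_mem hSNne hSNbdd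
  -- no directed edges inside the clique
  have hnoD : ∀ z ∈ Ck, ∀ w ∈ Ck, ¬ G.D z w := by
    intro z hz w hw hD
    by_cases h : z = w
    · subst h; exact G.D_irrefl _ hD
    · exact ((hclique hz hw h : z ≠ w ∧ ¬ G.D z w ∧ ¬ G.D w z).2.1 hD)
  have hpa_sub : ∀ X ∈ Ck, ∀ Y ∈ Ck, G.paSet {X, Y} ⊆ Set.univ \ Ck := by
    intro X hX Y hY z hzmem
    obtain ⟨w, hw, hDzw⟩ := hzmem
    refine ⟨trivial, fun hz => ?_⟩
    rcases hw with rfl | rfl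
    · exact hnoD z hz w hX hDzw
    · exact hnoD z hz w hY hDzw
  have huniv : (Set.univ \ Ck).ncard = n - c := by
    rw [Set.ncard_diff (Set.subset_univ _) (Set.toFinite _), Set.ncard_univ,
      Nat.card_eq_fintype_card, hn]
  have hs_le : sS ≤ n - c := by
    obtain ⟨X, hX, Y, hY, hne, hcard⟩ := hsmem
    rw [← hcard, ← huniv]
    exact Set.ncard_le_ncard (hpa_sub X hX Y hY) (Set.toFinite _)
  -- the finset of pair parent sets
  set tF : Finset V := (Set.toFinite Ck).toFinset with htF
  have htFc : tF.card = c := (Set.ncard_eq_toFinset_card Ck (Set.toFinite Ck)).symm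
  set g : Sym2 V → Set V :=
    Sym2.lift ⟨fun x y => G.paSet {x, y}, fun x y => congrArg G.paSet (Set.pair_comm x y)⟩ with hg
  set F : Finset (Set V) := (tF.sym2.filter (fun z => ¬ z.IsDiag)).image g with hF
  have hF2 : ∀ X ∈ Ck, ∀ Y ∈ Ck, X ≠ Y → G.paSet {X, Y} ∈ F := by
    intro X hX Y hY hne
    refine Finset.mem_image.2 ⟨s(X, Y), Finset.mem_filter.2
      ⟨Finset.mk_mem_sym2_iff.2 ⟨(Set.Finite.mem_toFinset _).2 hX,
        (Set.Finite.mem_toFinset _).2 hY⟩, by simpa using hne⟩, rfl⟩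
  have hF1 : ∀ A ∈ F, ∃ X ∈ Ck, ∃ Y ∈ Ck, X ≠ Y ∧ A = G.paSet {X, Y} := by
    intro A hA
    obtain ⟨z, hz, rfl⟩ := Finset.mem_image.1 hA
    revert hz
    refine z.ind ?_
    intro x y hz
    obtain ⟨hmem, hdiag⟩ := Finset.mem_filter.1 hz
    obtain ⟨hx, hy⟩ := Finset.mk_mem_sym2_iff.1 hmem
    exact ⟨x, (Set.Finite.mem_toFinset _).1 hx, y, (Set.Finite.mem_toFinset _).1 hy,
      by simpa using hdiag, rfl⟩
  have hFne : 1 ≤ F.card := Finset.card_pos.2 ⟨_, hF2 X₀ hX₀ Y₀ hY₀ hne₀⟩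
  -- |F| ≤ c(c-1)/2
  have hFcard : F.card ≤ c * (c - 1) / 2 := by
    have himg : tF.image Sym2.diag ⊆ tF.sym2.filter (fun z => z.IsDiag) := by
      intro z hz
      obtain ⟨a, ha, rfl⟩ := Finset.mem_image.1 hz
      exact Finset.mem_filter.2 ⟨Finset.diag_mem_sym2_iff.2 ha, Sym2.diag_isDiag a⟩
    have h1 : c ≤ (tF.sym2.filter (fun z => z.IsDiag)).card := by
      calc c = (tF.image Sym2.diag).card := by
              rw [Finset.card_image_of_injective _ Sym2.diag_injective, htFc]
        _ ≤ _ := Finset.card_le_card himg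
    have h2 := Finset.card_filter_add_card_filter_not
      (s := tF.sym2) (p := fun z : Sym2 V => z.IsDiag)
    have h3 : tF.sym2.card = c * (c - 1) / 2 + c := by
      rw [Finset.card_sym2, htFc, Nat.choose_two_right]
      have h4 : (c + 1) * ((c + 1) - 1) = c * (c - 1) + c * 2 := by
        cases c with
        | zero => rfl
        | succ m => simp [Nat.succ_sub_one]; ring
      rw [h4, Nat.add_mul_div_right _ _ (by norm_num : (0:ℕ) < 2)]
    calc F.card ≤ (tF.sym2.filter (fun z => ¬ z.IsDiag)).card := Finset.card_image_le
      _ ≤ c * (c - 1) / 2 := by omega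
  have hcardF : ∀ A ∈ F, A.ncard ≤ sS := by
    intro A hA
    obtain ⟨X, hX, Y, hY, hne, rfl⟩ := hF1 A hA
    exact le_csSup hSNbdd ⟨X, hX, Y, hY, hne, rfl⟩
  have hdisjF : ∀ A ∈ F, ∀ x ∈ Ck, x ∉ A := by
    intro A hA x hx hxA
    obtain ⟨X, hX, Y, hY, hne, rfl⟩ := hF1 A hA
    exact (hpa_sub X hX Y hY hxA).2 hx
  set q := max 1 (M / sS) with hqdef
  have hq : 1 ≤ q := le_max_left _ _
  have hsq : sS * q ≤ M := by
    by_cases hs0 : sS = 0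
    · simp [hs0]
    · have hspos : 0 < sS := Nat.pos_of_ne_zero hs0
      have hq' : q = M / sS := max_eq_right ((Nat.one_le_div_iff hspos).2 hsM)
      rw [hq']
      have := Nat.div_add_mod M sS
      omega
  obtain ⟨J, hJc, hJprops, hJcover⟩ := grouping F q sS M hq hcardF hsq Ck hdisjF
  refine ⟨J, ?_, hJprops, fun X hX Y hY hne => hJcover _ (hF2 X hX Y hY hne)⟩
  suffices h : (F.card - 1) / q ≤ ((c * (c - 1) / 2 - 1) * (n - c)) / (M + 1 - sS) by omega
  by_cases hs0 : sS = 0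
  · have hF1' : F.card ≤ 1 := by
      have hsub : F ⊆ {∅} := by
        intro A hA
        have := hcardF A hA
        rw [hs0, Nat.le_zero] at this
        simp [Set.ncard_eq_zero (Set.toFinite A) |>.1 this]
      exact (Finset.card_le_card hsub).trans (by simp)
    have : F.card - 1 = 0 := by omega
    rw [this, Nat.zero_div]
    exact Nat.zero_le _
  · have hspos : 0 < sS := Nat.pos_of_ne_zero hs0
    have hq' : q = M / sS := max_eq_right ((Nat.one_le_div_iff hspos).2 hsM)
    refine (Nat.le_div_iff_mul_le (by omega : 0 < M + 1 - sS)).2 ?_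
    have h1 : (F.card - 1) / q * q ≤ F.card - 1 := Nat.div_mul_le_self _ _
    have h2 : M + 1 - sS ≤ q * sS := by
      have hdm := Nat.div_add_mod M sS
      have hlt := Nat.mod_lt M hspos
      have hqq : q * sS = sS * (M / sS) := by rw [hq', Nat.mul_comm]
      omega
    calc (F.card - 1) / q * (M + 1 - sS)
        ≤ (F.card - 1) / q * (q * sS) := Nat.mul_le_mul_left _ h2
      _ = ((F.card - 1) / q * q) * sS := by ring
      _ ≤ (F.card - 1) * sS := Nat.mul_le_mul_right _ h1
      _ ≤ (c * (c - 1) / 2 - 1) * (n - c) :=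
          Nat.mul_le_mul (by omega) hs_le

end SepAux

/-- bounded non-adjacent separating system from an edge clique cover. -/
theorem bounded_nonAdj_separating_system {V : Type u} [Fintype V] (G : DMG V)
    (n l : ℕ) (hn : Fintype.card V = n) (hl : G.sccAncLength l) (ζ : ℕ)
    (hζ : IsGreatest {m | ∃ S : Set V, G.sccLayer l S ∧ S.ncard = m} ζ)
    (t : ℕ) (ht : (G.TUnion l).ncard = t) (M : ℕ)
    (hM1 : ∀ X Y : V, X ≠ Y → (G.paSet {X, Y}).ncard ≤ M)
    (hM2 : t + ζ - 1 ≤ M)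
    (K : ℕ) (C : Fin K → Set V)
    (hclique : ∀ k, (G.ucomp).IsClique (C k))
    (hcover : ∀ x y : V, (G.ucomp).Adj x y → ∃ k, x ∈ C k ∧ y ∈ C k)
    (hsize : ∀ k, 2 ≤ (C k).ncard) :
    ∃ 𝓘 : Set (Set V), 𝓘.Finite ∧ NonAdjSepSystem G 𝓘 ∧
      (∀ I ∈ 𝓘, I.ncard ≤ M) ∧
      𝓘.ncard ≤ ∑ k : Fin K, (1 +
        (((C k).ncard * ((C k).ncard - 1) / 2 - 1) * (n - (C k).ncard)) /
          (M + 1 - sSup {m | ∃ X ∈ C k, ∃ Y ∈ C k,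
            X ≠ Y ∧ (G.paSet {X, Y}).ncard = m})) :=  by
  classical
  have key := fun k : Fin K => SepAux.clique_key G n M hn hM1 (C k) (hclique k) (hsize k)
  choose J hJcard hJprops hJcover using key
  refine ⟨↑(Finset.univ.biUnion J), Finset.finite_toSet _, ?_, ?_, ?_⟩
  · intro X Y hne hD1 hD2
    obtain ⟨k, hX, hY⟩ := hcover X Y (⟨hne, hD1, hD2⟩ : X ≠ Y ∧ ¬ G.D X Y ∧ ¬ G.D Y X)
    obtain ⟨I, hIJ, hsub⟩ := hJcover k X hX Y hY hne
    exact ⟨I, Finset.mem_coe.2 (Finset.mem_biUnion.2 ⟨k, Finset.mem_univ k, hIJ⟩), hsub,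
      (hJprops k I hIJ).2 X hX, (hJprops k I hIJ).2 Y hY⟩
  · intro I hI
    obtain ⟨k, _, hIJ⟩ := Finset.mem_biUnion.1 (Finset.mem_coe.1 hI)
    exact (hJprops k I hIJ).1
  · rw [Set.ncard_coe_finset]
    exact Finset.card_biUnion_le.trans (Finset.sum_le_sum fun k _ => hJcard k)
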